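/- Under deterministic unbounded delays with delay-adaptive step size γ_k = c/D_{j(k)}, 0 < c < 1, and the essentially cyclically semi-unbounded delay (ECSD) block rule, for every T ≥ B one has lim_{(k∈Q_T)→∞} ‖∇f(x^k)‖₂ = 0, where Q_T := {k ∈ ℕ : j(k) ≤ T}. -/

import Mathlib

open MeasureTheory Filter
open scoped BigOperators

local notation "⟪" a ", " b "⟫" => @inner ℝ _ _ a b

private lemma descent_lemma' {E : Type*} [NormedAddCommGroup E] [InnerProductSpace ℝ E]
    [CompleteSpace E]
    (f : E → ℝ) (L : ℝ) (hL : 0 < L) (hdiff : Differentiable ℝ f)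
    (hlip : ∀ y z : E, ‖gradient f y - gradient f z‖ ≤ L * ‖y - z‖)
    (a v : E) : f (a + v) ≤ f a + ⟪gradient f a, v⟫ + L / 2 * ‖v‖ ^ 2 := by
  set g : ℝ → ℝ := fun t => f (a + t • v) - t * ⟪gradient f a, v⟫ - t ^ 2 * (L / 2 * ‖v‖ ^ 2) with hg
  have hd : ∀ t : ℝ, HasDerivAt g (⟪gradient f (a + t • v), v⟫ - ⟪gradient f a, v⟫ - 2 * t * (L / 2 * ‖v‖ ^ 2)) t := by
    intro t
    have h1 : HasDerivAt (fun t : ℝ => a + t • v) v t := by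
      simpa using ((hasDerivAt_id t).smul_const v).const_add a
    have h2 : HasDerivAt (fun t : ℝ => f (a + t • v)) (⟪gradient f (a + t • v), v⟫) t := by
      have := ((hdiff (a + t • v)).hasGradientAt.hasFDerivAt).comp_hasDerivAt t h1
      simpa [InnerProductSpace.toDual_apply_apply, Function.comp_def] using this
    have h3 : HasDerivAt (fun t : ℝ => t * ⟪gradient f a, v⟫) (⟪gradient f a, v⟫) t := by
      simpa using (hasDerivAt_id t).mul_const _
    have h4 : HasDerivAt (fun t : ℝ => t ^ 2 * (L / 2 * ‖v‖ ^ 2)) (2 * t * (L / 2 * ‖v‖ ^ 2)) t := by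
      simpa using (hasDerivAt_pow 2 t).mul_const (L / 2 * ‖v‖ ^ 2)
    exact (h2.sub h3).sub h4
  have hanti : AntitoneOn g (Set.Icc 0 1) := by
    apply antitoneOn_of_deriv_nonpos (convex_Icc 0 1)
    · exact Continuous.continuousOn (by
        apply Continuous.sub (Continuous.sub ?_ (by continuity)) (by continuity)
        exact hdiff.continuous.comp (by continuity))
    · intro t _
      exact ((hd t).differentiableAt).differentiableWithinAt
    · intro t ht
      rw [interior_Icc] at ht
      rw [(hd t).deriv]
      have hb : ⟪gradient f (a + t • v) - gradient f a, v⟫ ≤ L * t * ‖v‖ ^ 2 := by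
        calc ⟪gradient f (a + t • v) - gradient f a, v⟫ ≤ ‖gradient f (a + t • v) - gradient f a‖ * ‖v‖ :=
              real_inner_le_norm _ _
        _ ≤ (L * ‖(a + t • v) - a‖) * ‖v‖ := by
              have := hlip (a + t • v) a
              nlinarith [norm_nonneg v]
        _ = L * t * ‖v‖ ^ 2 := by
              rw [add_sub_cancel_left, norm_smul]
              simp [abs_of_nonneg ht.1.le]
              ring
      have heq : ⟪gradient f (a + t • v), v⟫ - ⟪gradient f a, v⟫ = ⟪gradient f (a + t • v) - gradient f a, v⟫ := by
        rw [inner_sub_left]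
      rw [heq]
      nlinarith
  have h01 := hanti (Set.mem_Icc.2 ⟨le_refl 0, zero_le_one⟩) (Set.mem_Icc.2 ⟨zero_le_one, le_refl 1⟩) zero_le_one
  simp only [hg] at h01
  simp at h01
  linarith [inner_gradient_left (𝕜 := ℝ) (f := f) (x := a) (y := v)]

private lemma coord_abs_le_norm' {n : ℕ} (v : EuclideanSpace ℝ (Fin n)) (i : Fin n) : |v i| ≤ ‖v‖ := by
  have h := abs_real_inner_le_norm (EuclideanSpace.single i (1:ℝ)) v
  simpa [EuclideanSpace.inner_single_left] using h

private lemma norm_le_sum_abs' {n : ℕ} (v : EuclideanSpace ℝ (Fin n)) : ‖v‖ ≤ ∑ i : Fin n, |v i| := by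
  have hv : v = ∑ i : Fin n, EuclideanSpace.single i (v i) := by
    ext j
    rw [WithLp.ofLp_sum, Finset.sum_apply]
    simp [EuclideanSpace.single_apply]
  calc ‖v‖ = ‖∑ i : Fin n, EuclideanSpace.single i (v i)‖ := by rw [← hv]
  _ ≤ ∑ i : Fin n, ‖EuclideanSpace.single i (v i)‖ := norm_sum_le _ _
  _ = ∑ i : Fin n, |v i| := by simp [EuclideanSpace.norm_single]

private lemma norm_le_norm_of_abs_le' {n : ℕ} (v w : EuclideanSpace ℝ (Fin n))
    (h : ∀ i, |v i| ≤ |w i|) : ‖v‖ ≤ ‖w‖ := by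
  rw [EuclideanSpace.norm_eq, EuclideanSpace.norm_eq]
  apply Real.sqrt_le_sqrt
  apply Finset.sum_le_sum
  intro i _
  have := h i
  simp only [Real.norm_eq_abs]
  nlinarith [abs_nonneg (v i), abs_nonneg (w i)]

private lemma telescope_sum' {n : ℕ} (x : ℕ → EuclideanSpace ℝ (Fin n)) (a b : ℕ) (hab : a ≤ b) :
    x b - x a = ∑ m ∈ Finset.Ico a b, (x (m+1) - x m) := by
  induction b with
  | zero => simp_all
  | succ b ih =>
    rcases Nat.lt_or_ge a (b+1) with h | h
    · have hab' : a ≤ b := Nat.lt_succ_iff.mp h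
      rw [Finset.sum_Ico_succ_top hab', ← ih hab']
      abel
    · have : a = b + 1 := le_antisymm hab h
      subst this; simp

private lemma sum_Ico_sub_eq' (k J : ℕ) (hJ : J ≤ k) (g : ℕ → ℝ) :
    ∑ m ∈ Finset.Ico (k - J) k, g m = ∑ i ∈ Finset.Icc 1 J, g (k - i) := by
  apply Finset.sum_nbij' (fun m => k - m) (fun i => k - i)
  · intro a ha; simp only [Finset.mem_Ico, Finset.mem_Icc] at *; omega
  · intro a ha; simp only [Finset.mem_Ico, Finset.mem_Icc] at *; omega
  · intro a ha; simp only [Finset.mem_Ico] at ha; omega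
  · intro a ha; simp only [Finset.mem_Icc] at ha; omega
  · intro a ha; simp only [Finset.mem_Ico] at ha; congr 1; omega

private lemma sum_Icc_reindex' (k : ℕ) (g : ℕ → ℕ → ℝ) :
    ∑ i ∈ Finset.Icc 1 k, g i (k - i) = ∑ m ∈ Finset.Ico 0 k, g (k - m) m := by
  apply Finset.sum_nbij' (fun i => k - i) (fun m => k - m)
  · intro a ha; simp only [Finset.mem_Ico, Finset.mem_Icc] at *; omega
  · intro a ha; simp only [Finset.mem_Ico, Finset.mem_Icc] at *; omega
  · intro a ha; simp only [Finset.mem_Icc] at ha; omega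
  · intro a ha; simp only [Finset.mem_Ico] at ha; omega
  · intro a ha; simp only [Finset.mem_Icc] at ha
    have h1 : k - (k - a) = a := by omega
    rw [h1]

private lemma amgm' (u a b : ℝ) (hu : 0 < u) : a * b ≤ u/2 * b^2 + 1/(2*u) * a^2 := by
  have h2 : (0:ℝ) < 2 * u := by linarith
  have e : 2*u*(u/2*b^2 + 1/(2*u)*a^2) = u^2*b^2 + a^2 := by field_simp
  have key : 2*u*(a*b) ≤ 2*u*(u/2*b^2 + 1/(2*u)*a^2) := by
    rw [e]; nlinarith [sq_nonneg (u*b - a)]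
  exact (mul_le_mul_iff_right₀ h2).mp key

set_option maxHeartbeats 1000000 in
theorem deterministic_unbounded_ECSD_convergence
    (N : ℕ) (hN : 0 < N)
    (f : EuclideanSpace ℝ (Fin N) → ℝ)
    (L : ℝ) (hL : 0 < L)
    (hdiff : Differentiable ℝ f)
    (hlip : ∀ y z : EuclideanSpace ℝ (Fin N), ‖gradient f y - gradient f z‖ ≤ L * ‖y - z‖)
    (fmin : ℝ) (hfmin : ∀ y, fmin ≤ f y)
    (x : ℕ → EuclideanSpace ℝ (Fin N))
    (ik : ℕ → Fin N)
    (jv : ℕ → Fin N → ℕ)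
    (hjk : ∀ k i, jv k i ≤ k)
    (xhat : ℕ → EuclideanSpace ℝ (Fin N))
    (hxhat : ∀ k i, xhat k i = x (k - jv k i) i)
    (εs : ℕ → ℝ) (hεs : ∀ i, 0 < εs i)
    (κ : ℕ → ℝ) (hκ : ∀ i : ℕ, HasSum (fun j : ℕ => if i ≤ j then εs j else 0) (κ i))
    (Dd : ℕ → ℝ) (hDd : ∀ m : ℕ, Dd m = 1 / 2 + κ 1 / 2 + ∑ i ∈ Finset.Icc 1 m, 1 / (2 * εs i))
    (c : ℝ) (hc : 0 < c) (hc1 : c < 1)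
    (γ : ℕ → ℝ) (hγ : ∀ k, γ k = c / Dd (Finset.univ.sup (jv k)))
    (hliminf : ∃ T0 : ℕ, ∃ᶠ k in atTop, Finset.univ.sup (jv k) ≤ T0)
    (hupd : ∀ k, x (k+1) (ik k) = x k (ik k) - (γ k / L) * gradient f (xhat k) (ik k))
    (hfix : ∀ k i, i ≠ ik k → x (k+1) i = x k i)
    (N' B : ℕ) (hNN' : N ≤ N')
    (hECSD : ∀ t : ℕ, ∀ i : Fin N, ∃ k : ℕ, t * N' ≤ k ∧ k < (t + 1) * N' ∧ ik k = i ∧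
      Finset.univ.sup (jv k) ≤ B) :
    ∀ T : ℕ, B ≤ T →
      Tendsto (fun k => ‖gradient f (x k)‖)
        (atTop ⊓ Filter.principal {k | Finset.univ.sup (jv k) ≤ T}) (nhds 0) := by
  intro T hT
  -- basic setup
  set δ : ℕ → EuclideanSpace ℝ (Fin N) := fun k => x (k+1) - x k with hδdef
  set J : ℕ → ℕ := fun k => Finset.univ.sup (jv k) with hJdef
  have hκ1 : 0 ≤ κ 1 := by
    apply (hκ 1).nonneg
    intro j
    split
    · exact (hεs j).le
    · exact le_rfl
  have hDpos : ∀ m, 0 < Dd m := by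
    intro m
    rw [hDd]
    have h1 : (0:ℝ) ≤ ∑ i ∈ Finset.Icc 1 m, 1 / (2 * εs i) :=
      Finset.sum_nonneg fun i _ => by have := hεs i; positivity
    linarith
  have hDlb : ∀ m, 1/2 + κ 1/2 ≤ Dd m := by
    intro m
    rw [hDd m]
    have h1 : (0:ℝ) ≤ ∑ i ∈ Finset.Icc 1 m, 1 / (2 * εs i) :=
      Finset.sum_nonneg fun i _ => by have := hεs i; positivity
    linarith
  have hDmono : ∀ a b : ℕ, a ≤ b → Dd a ≤ Dd b := by
    intro a b hab
    rw [hDd a, hDd b]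
    have := Finset.sum_le_sum_of_subset_of_nonneg
      (Finset.Icc_subset_Icc_right hab : Finset.Icc 1 a ⊆ Finset.Icc 1 b)
      (fun i _ _ => by have := hεs i; positivity : ∀ i ∈ Finset.Icc 1 b, i ∉ Finset.Icc 1 a → (0:ℝ) ≤ 1 / (2 * εs i))
    linarith
  have hγpos : ∀ k, 0 < γ k := fun k => by rw [hγ k]; exact div_pos hc (hDpos _)
  have hJle : ∀ k, J k ≤ k := fun k => Finset.sup_le fun i _ => hjk k i
  have hjvJ : ∀ k i, jv k i ≤ J k := fun k i => Finset.le_sup (Finset.mem_univ i)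
  -- structure of δ
  have key2 : ∀ k, δ k (ik k) = -(γ k / L) * gradient f (xhat k) (ik k) := by
    intro k
    show x (k+1) (ik k) - x k (ik k) = _
    rw [hupd k]; ring
  have hδsingle : ∀ k, δ k = EuclideanSpace.single (ik k) (δ k (ik k)) := by
    intro k
    ext i
    rcases eq_or_ne i (ik k) with h | h
    · subst h; simp [EuclideanSpace.single_apply]
    · rw [EuclideanSpace.single_apply, if_neg h]
      show x (k+1) i - x k i = 0
      rw [hfix k i h]; ring
  have hnormδ : ∀ k, ‖δ k‖ = |δ k (ik k)| := by
    intro k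
    conv_lhs => rw [hδsingle k]
    rw [EuclideanSpace.norm_single, Real.norm_eq_abs]
  have hinner : ∀ k, ⟪gradient f (x k), δ k⟫ = δ k (ik k) * gradient f (x k) (ik k) := by
    intro k
    conv_lhs => rw [hδsingle k]
    rw [EuclideanSpace.inner_single_right]
    simp
  -- telescoping bounds
  have htel : ∀ a b : ℕ, a ≤ b → ‖x b - x a‖ ≤ ∑ m ∈ Finset.Ico a b, ‖δ m‖ := by
    intro a b hab
    rw [telescope_sum' x a b hab]
    exact norm_sum_le _ _
  have hhat : ∀ k, ‖x k - xhat k‖ ≤ ∑ m ∈ Finset.Ico (k - J k) k, ‖δ m‖ := by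
    intro k
    set y : ℕ → EuclideanSpace ℝ (Fin N) :=
      fun m => WithLp.toLp 2 (fun i => if k - jv k i ≤ m then δ m i else 0) with hy
    have hxe : x k - xhat k = ∑ m ∈ Finset.Ico (k - J k) k, y m := by
      ext i
      rw [WithLp.ofLp_sum, Finset.sum_apply]
      have h1 : ∀ m, y m i = if k - jv k i ≤ m then δ m i else 0 := fun m => rfl
      have h2 : ∑ m ∈ Finset.Ico (k - J k) k, y m i
          = ∑ m ∈ Finset.Ico (k - jv k i) k, δ m i := by
        simp only [h1]
        rw [← Finset.sum_filter]
        congr 1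
        ext m
        simp only [Finset.mem_filter, Finset.mem_Ico]
        have := hjvJ k i
        omega
      rw [h2]
      have h3 := telescope_sum' x (k - jv k i) k (Nat.sub_le _ _)
      have h4 := congrArg (fun v : EuclideanSpace ℝ (Fin N) => v i) h3
      simp only at h4
      rw [WithLp.ofLp_sum, Finset.sum_apply] at h4
      show x k i - xhat k i = _
      rw [hxhat k i]
      exact h4
    rw [hxe]
    calc ‖∑ m ∈ Finset.Ico (k - J k) k, y m‖ ≤ ∑ m ∈ Finset.Ico (k - J k) k, ‖y m‖ :=
          norm_sum_le _ _
    _ ≤ ∑ m ∈ Finset.Ico (k - J k) k, ‖δ m‖ := by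
        apply Finset.sum_le_sum
        intro m _
        apply norm_le_norm_of_abs_le'
        intro i
        show |if k - jv k i ≤ m then δ m i else 0| ≤ _
        split
        · exact le_rfl
        · simp [abs_nonneg]
  -- per-step descent inequality
  set A : ℝ := (1/c - 1) * (1/2 + κ 1/2) + κ 1/2 with hAdef
  have hinvc : 0 < 1/c - 1 := by
    have : 1 < 1/c := by rw [lt_div_iff₀ hc]; linarith
    linarith
  have hstep : ∀ k, f (x (k+1)) ≤ f (x k) - L*A*‖δ k‖^2
      + L/2 * ∑ i ∈ Finset.Icc 1 (J k), εs i * ‖δ (k-i)‖^2 := by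
    intro k
    have hxx : x k + δ k = x (k+1) := by
      show x k + (x (k+1) - x k) = x (k+1); abel
    have h1 : f (x (k+1)) ≤ f (x k) + δ k (ik k) * gradient f (x k) (ik k) + L/2 * ‖δ k‖^2 := by
      have hdl := descent_lemma' f L hL hdiff hlip (x k) (δ k)
      rw [hxx, hinner k] at hdl
      exact hdl
    have hγk := hγpos k
    have hdh : δ k (ik k) * gradient f (xhat k) (ik k) = -(L / γ k) * ‖δ k‖^2 := by
      rw [hnormδ k, sq_abs, key2 k]
      field_simp
    have hcross : δ k (ik k) * (gradient f (x k) (ik k) - gradient f (xhat k) (ik k))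
        ≤ L * ∑ i ∈ Finset.Icc 1 (J k), ‖δ k‖ * ‖δ (k-i)‖ := by
      have e1 : |gradient f (x k) (ik k) - gradient f (xhat k) (ik k)|
          ≤ ‖gradient f (x k) - gradient f (xhat k)‖ := by
        have : gradient f (x k) (ik k) - gradient f (xhat k) (ik k)
            = (gradient f (x k) - gradient f (xhat k)) (ik k) := rfl
        rw [this]
        exact coord_abs_le_norm' _ _
      have e2 : ‖gradient f (x k) - gradient f (xhat k)‖ ≤ L * ‖x k - xhat k‖ := hlip _ _
      have e3 : ‖x k - xhat k‖ ≤ ∑ i ∈ Finset.Icc 1 (J k), ‖δ (k-i)‖ := by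
        rw [← sum_Ico_sub_eq' k (J k) (hJle k) (fun m => ‖δ m‖)]
        exact hhat k
      calc δ k (ik k) * (gradient f (x k) (ik k) - gradient f (xhat k) (ik k))
          ≤ |δ k (ik k) * (gradient f (x k) (ik k) - gradient f (xhat k) (ik k))| := le_abs_self _
      _ = ‖δ k‖ * |gradient f (x k) (ik k) - gradient f (xhat k) (ik k)| := by
          rw [abs_mul, hnormδ k]
      _ ≤ ‖δ k‖ * (L * ∑ i ∈ Finset.Icc 1 (J k), ‖δ (k-i)‖) := by
          apply mul_le_mul_of_nonneg_left _ (norm_nonneg _)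
          calc |gradient f (x k) (ik k) - gradient f (xhat k) (ik k)|
              ≤ L * ‖x k - xhat k‖ := e1.trans e2
          _ ≤ L * ∑ i ∈ Finset.Icc 1 (J k), ‖δ (k-i)‖ :=
              mul_le_mul_of_nonneg_left e3 hL.le
      _ = L * ∑ i ∈ Finset.Icc 1 (J k), ‖δ k‖ * ‖δ (k-i)‖ := by
          rw [Finset.mul_sum, Finset.mul_sum, Finset.mul_sum]
          apply Finset.sum_congr rfl
          intro i _
          ring
    have hamgm : ∑ i ∈ Finset.Icc 1 (J k), ‖δ k‖ * ‖δ (k-i)‖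
        ≤ ∑ i ∈ Finset.Icc 1 (J k), (εs i/2 * ‖δ (k-i)‖^2 + 1/(2*εs i) * ‖δ k‖^2) :=
      Finset.sum_le_sum fun i _ => amgm' (εs i) (‖δ k‖) (‖δ (k-i)‖) (hεs i)
    have hsum_split : ∑ i ∈ Finset.Icc 1 (J k), (εs i/2 * ‖δ (k-i)‖^2 + 1/(2*εs i) * ‖δ k‖^2)
        = 1/2 * (∑ i ∈ Finset.Icc 1 (J k), εs i * ‖δ (k-i)‖^2)
          + (∑ i ∈ Finset.Icc 1 (J k), 1/(2*εs i)) * ‖δ k‖^2 := by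
      rw [Finset.sum_add_distrib, Finset.mul_sum, Finset.sum_mul]
      congr 1
      apply Finset.sum_congr rfl
      intro i _
      ring
    have hCk : ∑ i ∈ Finset.Icc 1 (J k), 1/(2*εs i) = Dd (J k) - 1/2 - κ 1/2 := by
      rw [hDd (J k)]; ring
    have hγL : L / γ k = L * Dd (J k) / c := by
      rw [hγ k, div_div_eq_mul_div]
    have hcoef : L * (Dd (J k) - 1/2 - κ 1/2) - L * Dd (J k) / c + L/2 ≤ -(L*A) := by
      have h1 : (1/c - 1) * (1/2 + κ 1/2) ≤ (1/c - 1) * Dd (J k) :=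
        mul_le_mul_of_nonneg_left (hDlb (J k)) hinvc.le
      have h2 : L * ((1/c - 1) * (1/2 + κ 1/2)) ≤ L * ((1/c - 1) * Dd (J k)) :=
        mul_le_mul_of_nonneg_left h1 hL.le
      have h3 : L * Dd (J k) / c = L * (Dd (J k) * (1/c)) := by
        field_simp
      rw [h3, hAdef]
      ring_nf
      ring_nf at h2
      linarith
    -- assemble
    have F2 : δ k (ik k) * gradient f (x k) (ik k)
        = δ k (ik k) * (gradient f (x k) (ik k) - gradient f (xhat k) (ik k))
          + δ k (ik k) * gradient f (xhat k) (ik k) := by ring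
    have F5 : L * ∑ i ∈ Finset.Icc 1 (J k), ‖δ k‖ * ‖δ (k-i)‖
        ≤ L * ∑ i ∈ Finset.Icc 1 (J k), (εs i/2 * ‖δ (k-i)‖^2 + 1/(2*εs i) * ‖δ k‖^2) :=
      mul_le_mul_of_nonneg_left hamgm hL.le
    have F6 : L * ∑ i ∈ Finset.Icc 1 (J k), (εs i/2 * ‖δ (k-i)‖^2 + 1/(2*εs i) * ‖δ k‖^2)
        = L/2 * (∑ i ∈ Finset.Icc 1 (J k), εs i * ‖δ (k-i)‖^2)
          + (L * (Dd (J k) - 1/2 - κ 1/2)) * ‖δ k‖^2 := by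
      rw [hsum_split, hCk]
      ring
    have F7 := mul_le_mul_of_nonneg_right hcoef (sq_nonneg (‖δ k‖))
    have F3 : δ k (ik k) * gradient f (xhat k) (ik k) = -(L * Dd (J k) / c) * ‖δ k‖^2 := by
      rw [hdh, hγL]
    linarith [F2, F5, F6, F7, F3, h1, hcross]
  -- summation over k
  have hsumstep : ∀ K : ℕ, f (x K) ≤ f (x 0) - L*A*(∑ k ∈ Finset.range K, ‖δ k‖^2)
      + L/2 * ∑ k ∈ Finset.range K, ∑ i ∈ Finset.Icc 1 (J k), εs i * ‖δ (k-i)‖^2 := by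
    intro K
    induction K with
    | zero => simp
    | succ K ih =>
      have h := hstep K
      rw [Finset.sum_range_succ, Finset.sum_range_succ]
      have hexp : L/2 * ((∑ k ∈ Finset.range K, ∑ i ∈ Finset.Icc 1 (J k), εs i * ‖δ (k-i)‖^2)
          + ∑ i ∈ Finset.Icc 1 (J K), εs i * ‖δ (K-i)‖^2)
          = L/2 * (∑ k ∈ Finset.range K, ∑ i ∈ Finset.Icc 1 (J k), εs i * ‖δ (k-i)‖^2)
            + L/2 * ∑ i ∈ Finset.Icc 1 (J K), εs i * ‖δ (K-i)‖^2 := by ring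
      rw [hexp]
      linarith
  -- bounding the cross terms
  have hcrossle : ∀ K : ℕ, ∑ k ∈ Finset.range K, ∑ i ∈ Finset.Icc 1 (J k), εs i * ‖δ (k-i)‖^2
      ≤ κ 1 * ∑ k ∈ Finset.range K, ‖δ k‖^2 := by
    intro K
    have step1 : ∑ k ∈ Finset.range K, ∑ i ∈ Finset.Icc 1 (J k), εs i * ‖δ (k-i)‖^2
        ≤ ∑ k ∈ Finset.range K, ∑ i ∈ Finset.Icc 1 k, εs i * ‖δ (k-i)‖^2 := by
      apply Finset.sum_le_sum
      intro k _
      apply Finset.sum_le_sum_of_subset_of_nonneg (Finset.Icc_subset_Icc_right (hJle k))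
      intro i _ _
      have := hεs i
      positivity
    have step2 : ∀ k : ℕ, ∑ i ∈ Finset.Icc 1 k, εs i * ‖δ (k-i)‖^2
        = ∑ m ∈ Finset.Ico 0 k, εs (k-m) * ‖δ m‖^2 :=
      fun k => sum_Icc_reindex' k (fun i m => εs i * ‖δ m‖^2)
    have step3 : ∑ k ∈ Finset.range K, ∑ m ∈ Finset.Ico 0 k, εs (k-m) * ‖δ m‖^2
        = ∑ m ∈ Finset.range K, ∑ k ∈ Finset.Ico (m+1) K, εs (k-m) * ‖δ m‖^2 := by
      rw [Finset.range_eq_Ico]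
      exact (Finset.sum_Ico_Ico_comm' 0 K (fun m k => εs (k-m) * ‖δ m‖^2)).symm
    have step4 : ∀ m : ℕ, ∑ k ∈ Finset.Ico (m+1) K, εs (k-m) ≤ κ 1 := by
      intro m
      have h1 : ∑ k ∈ Finset.Ico (m+1) K, εs (k-m)
          = ∑ i ∈ Finset.Ico 1 (K-m), (if 1 ≤ i then εs i else 0) := by
        apply Finset.sum_nbij' (fun k => k - m) (fun i => i + m)
        · intro z hz; simp only [Finset.mem_Ico] at *; omega
        · intro z hz; simp only [Finset.mem_Ico] at *; omega
        · intro z hz; simp only [Finset.mem_Ico] at hz; omega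
        · intro z hz; simp only [Finset.mem_Ico] at hz; omega
        · intro z hz; simp only [Finset.mem_Ico] at hz
          rw [if_pos (by omega)]
      rw [h1]
      apply sum_le_hasSum _ _ (hκ 1)
      intro i _
      split
      · exact (hεs i).le
      · exact le_rfl
    calc ∑ k ∈ Finset.range K, ∑ i ∈ Finset.Icc 1 (J k), εs i * ‖δ (k-i)‖^2
        ≤ ∑ k ∈ Finset.range K, ∑ i ∈ Finset.Icc 1 k, εs i * ‖δ (k-i)‖^2 := step1
    _ = ∑ m ∈ Finset.range K, ∑ k ∈ Finset.Ico (m+1) K, εs (k-m) * ‖δ m‖^2 := by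
        rw [← step3]
        exact Finset.sum_congr rfl fun k _ => step2 k
    _ = ∑ m ∈ Finset.range K, (∑ k ∈ Finset.Ico (m+1) K, εs (k-m)) * ‖δ m‖^2 := by
        apply Finset.sum_congr rfl
        intro m _
        rw [Finset.sum_mul]
    _ ≤ ∑ m ∈ Finset.range K, κ 1 * ‖δ m‖^2 := by
        apply Finset.sum_le_sum
        intro m _
        exact mul_le_mul_of_nonneg_right (step4 m) (sq_nonneg _)
    _ = κ 1 * ∑ m ∈ Finset.range K, ‖δ m‖^2 := by rw [Finset.mul_sum]
  -- summability of ‖δ k‖²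
  set β : ℝ := (1/c - 1) * (1/2 + κ 1/2) with hβdef
  have hβpos : 0 < β := by
    have : (0:ℝ) < 1/2 + κ 1/2 := by linarith
    exact mul_pos hinvc this
  have hbound : ∀ K : ℕ, ∑ k ∈ Finset.range K, ‖δ k‖^2 ≤ (f (x 0) - fmin) / (L * β) := by
    intro K
    have h1 := hsumstep K
    have h2 := hcrossle K
    have h3 := hfmin (x K)
    have h4 : L/2 * (∑ k ∈ Finset.range K, ∑ i ∈ Finset.Icc 1 (J k), εs i * ‖δ (k-i)‖^2)
        ≤ L/2 * (κ 1 * ∑ k ∈ Finset.range K, ‖δ k‖^2) :=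
      mul_le_mul_of_nonneg_left h2 (by linarith)
    have h5 : L * β * (∑ k ∈ Finset.range K, ‖δ k‖^2) ≤ f (x 0) - fmin := by
      have hAβ : L*A*(∑ k ∈ Finset.range K, ‖δ k‖^2)
          - L/2 * (κ 1 * ∑ k ∈ Finset.range K, ‖δ k‖^2)
          = L * β * (∑ k ∈ Finset.range K, ‖δ k‖^2) := by
        rw [hAdef, hβdef]; ring
      linarith
    rw [le_div_iff₀ (mul_pos hL hβpos)]
    linarith [h5]
  have hsummable : Summable (fun k => ‖δ k‖^2) :=
    summable_of_sum_range_le (fun k => sq_nonneg _) hbound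
  have hδ2zero : Tendsto (fun k => ‖δ k‖^2) atTop (nhds 0) := hsummable.tendsto_atTop_zero
  have hδzero : Tendsto (fun k => ‖δ k‖) atTop (nhds 0) := by
    have h := hδ2zero.sqrt
    simp only [Real.sqrt_zero] at h
    have heq : ∀ k, Real.sqrt (‖δ k‖^2) = ‖δ k‖ := fun k => Real.sqrt_sq (norm_nonneg _)
    exact h.congr heq
  -- final: gradient tends to zero along atTop
  have hN' : 0 < N' := lt_of_lt_of_le hN hNN'
  set W : ℕ := N' + B with hWdef
  set Sw : ℕ → ℝ := fun k => ∑ m ∈ Finset.Ico (k + 1 - W) (k + N'), ‖δ m‖ with hSwdef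
  set C : ℝ := (N : ℝ) * (2*L + L * Dd B / c) with hCdef
  have hLDBc : (0:ℝ) ≤ L * Dd B / c := div_nonneg (mul_nonneg hL.le (hDpos B).le) hc.le
  have hgradbound : ∀ k, ‖gradient f (x k)‖ ≤ C * Sw k := by
    intro k
    have hpercoord : ∀ i : Fin N, |gradient f (x k) i| ≤ (2*L + L * Dd B / c) * Sw k := by
      intro i
      obtain ⟨K, hK1, hK2, hKi, hKJ⟩ := hECSD (k / N') i
      rw [add_one_mul] at hK2
      subst hKi
      have hJKle : J K ≤ B := hKJ
      set p : ℕ := k / N' * N' with hpdef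
      have hp1 : p ≤ k := Nat.div_mul_le_self _ _
      have hp2 : k < p + N' := Nat.lt_div_mul_add hN'
      have hxkK : ‖x k - x K‖ ≤ Sw k := by
        rcases le_total k K with h | h
        · rw [norm_sub_rev]
          calc ‖x K - x k‖ ≤ ∑ m ∈ Finset.Ico k K, ‖δ m‖ := htel k K h
          _ ≤ Sw k := by
              apply Finset.sum_le_sum_of_subset_of_nonneg
              · apply Finset.Ico_subset_Ico <;> omega
              · intro m _ _; exact norm_nonneg _
        · calc ‖x k - x K‖ ≤ ∑ m ∈ Finset.Ico K k, ‖δ m‖ := htel K k h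
          _ ≤ Sw k := by
              apply Finset.sum_le_sum_of_subset_of_nonneg
              · apply Finset.Ico_subset_Ico <;> omega
              · intro m _ _; exact norm_nonneg _
      have hxhatK : ‖x K - xhat K‖ ≤ Sw k := by
        calc ‖x K - xhat K‖ ≤ ∑ m ∈ Finset.Ico (K - J K) K, ‖δ m‖ := hhat K
        _ ≤ Sw k := by
            apply Finset.sum_le_sum_of_subset_of_nonneg
            · apply Finset.Ico_subset_Ico <;> omega
            · intro m _ _; exact norm_nonneg _
      have hδK : ‖δ K‖ ≤ Sw k := by
        apply Finset.single_le_sum (fun m _ => norm_nonneg (δ m))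
        simp only [Finset.mem_Ico]
        omega
      have b1 : |gradient f (x k) (ik K) - gradient f (x K) (ik K)| ≤ L * Sw k := by
        calc |gradient f (x k) (ik K) - gradient f (x K) (ik K)|
            = |(gradient f (x k) - gradient f (x K)) (ik K)| := rfl
        _ ≤ ‖gradient f (x k) - gradient f (x K)‖ := coord_abs_le_norm' _ _
        _ ≤ L * ‖x k - x K‖ := hlip _ _
        _ ≤ L * Sw k := mul_le_mul_of_nonneg_left hxkK hL.le
      have b2 : |gradient f (x K) (ik K) - gradient f (xhat K) (ik K)| ≤ L * Sw k := by
        calc |gradient f (x K) (ik K) - gradient f (xhat K) (ik K)|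
            = |(gradient f (x K) - gradient f (xhat K)) (ik K)| := rfl
        _ ≤ ‖gradient f (x K) - gradient f (xhat K)‖ := coord_abs_le_norm' _ _
        _ ≤ L * ‖x K - xhat K‖ := hlip _ _
        _ ≤ L * Sw k := mul_le_mul_of_nonneg_left hxhatK hL.le
      have b3 : |gradient f (xhat K) (ik K)| ≤ (L * Dd B / c) * Sw k := by
        have hγK := hγpos K
        have hLne : L ≠ 0 := hL.ne'
        have hγne : γ K ≠ 0 := hγK.ne'
        have e1 : gradient f (xhat K) (ik K) = -(L / γ K) * δ K (ik K) := by
          rw [key2 K]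
          field_simp
        have hγle : L / γ K ≤ L * Dd B / c := by
          rw [hγ K, div_div_eq_mul_div]
          exact (div_le_div_iff_of_pos_right hc).mpr
            (mul_le_mul_of_nonneg_left (hDmono _ _ hJKle) hL.le)
        have estep : |gradient f (xhat K) (ik K)| = (L / γ K) * |δ K (ik K)| := by
          rw [e1, abs_mul, abs_neg, abs_div, abs_of_pos hL, abs_of_pos hγK]
        calc |gradient f (xhat K) (ik K)| = (L / γ K) * |δ K (ik K)| := estep
        _ = (L / γ K) * ‖δ K‖ := by rw [← hnormδ K]
        _ ≤ (L * Dd B / c) * ‖δ K‖ := mul_le_mul_of_nonneg_right hγle (norm_nonneg _)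
        _ ≤ (L * Dd B / c) * Sw k := mul_le_mul_of_nonneg_left hδK hLDBc
      have tri : |gradient f (x k) (ik K)| ≤ |gradient f (x k) (ik K) - gradient f (x K) (ik K)|
          + |gradient f (x K) (ik K) - gradient f (xhat K) (ik K)| + |gradient f (xhat K) (ik K)| := by
        have h1 := abs_add_le (gradient f (x k) (ik K) - gradient f (x K) (ik K))
          ((gradient f (x K) (ik K) - gradient f (xhat K) (ik K)) + gradient f (xhat K) (ik K))
        have h2 := abs_add_le (gradient f (x K) (ik K) - gradient f (xhat K) (ik K))
          (gradient f (xhat K) (ik K))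
        have e : gradient f (x k) (ik K) = (gradient f (x k) (ik K) - gradient f (x K) (ik K))
            + ((gradient f (x K) (ik K) - gradient f (xhat K) (ik K)) + gradient f (xhat K) (ik K)) := by
          ring
        calc |gradient f (x k) (ik K)| = _ := congrArg abs e
        _ ≤ _ := h1
        _ ≤ _ := by linarith
      linarith [b1, b2, b3, tri]
    calc ‖gradient f (x k)‖ ≤ ∑ i : Fin N, |gradient f (x k) i| := norm_le_sum_abs' _
    _ ≤ ∑ _i : Fin N, (2*L + L * Dd B / c) * Sw k := Finset.sum_le_sum fun i _ => hpercoord i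
    _ = C * Sw k := by
        rw [Finset.sum_const, Finset.card_univ, Fintype.card_fin, nsmul_eq_mul, hCdef]
        ring
  have hSwnonneg : ∀ k, 0 ≤ Sw k := fun k => Finset.sum_nonneg fun m _ => norm_nonneg _
  have hSwzero : Tendsto Sw atTop (nhds 0) := by
    set W2 : ℕ := N' - 1 + W with hW2def
    have hTz : Tendsto (fun k => ∑ j ∈ Finset.range W2, ‖δ (k + 1 - W + j)‖) atTop (nhds 0) := by
      have hterm : ∀ j : ℕ, Tendsto (fun k => ‖δ (k + 1 - W + j)‖) atTop (nhds 0) := by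
        intro j
        have hcomp : Tendsto (fun k : ℕ => k + 1 - W + j) atTop atTop :=
          ((tendsto_add_atTop_nat j).comp (tendsto_sub_atTop_nat W)).comp (tendsto_add_atTop_nat 1)
        exact hδzero.comp hcomp
      have hsum := tendsto_finset_sum (Finset.range W2) (fun j _ => hterm j)
      simpa using hsum
    have heq : (fun k => ∑ j ∈ Finset.range W2, ‖δ (k + 1 - W + j)‖) =ᶠ[atTop] Sw := by
      filter_upwards [eventually_ge_atTop W] with k hk
      have hcount : k + N' - (k + 1 - W) = W2 := by
        have h1 : W = N' + B := hWdef
        have h2 : W2 = N' - 1 + W := hW2def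
        have h3 : 0 < N' := hN'
        omega
      rw [hSwdef]
      simp only
      rw [Finset.sum_Ico_eq_sum_range, hcount]
    exact Filter.Tendsto.congr' heq hTz
  have hmain : Tendsto (fun k => ‖gradient f (x k)‖) atTop (nhds 0) := by
    have hCS : Tendsto (fun k => C * Sw k) atTop (nhds 0) := by
      simpa using hSwzero.const_mul C
    exact squeeze_zero (fun k => norm_nonneg _) hgradbound hCS
  exact hmain.mono_left inf_le_left
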